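/- Let p_n denote the n-th prime and Q_n(s) = Π_{k=1}^n (1 − p_k^{-s})^{-1} the partial Euler product (with Q_0(s) = 1). Then for every n ≥ 0, p_{n+1} = lim_{s→∞} (1 − Q_n(s)/ζ(s))^{-1/s}, where s ranges over real numbers tending to infinity. -/

import Mathlib

open Filter

/-- The completely multiplicative map `m ↦ (m : ℝ) ^ (-s)` as a monoid hom. -/
noncomputable def golombRpowHom (s : ℝ) : ℕ →* ℝ where
  toFun m := (m : ℝ) ^ (-s)
  map_one' := by simp
  map_mul' a b := by
    push_cast
    exact Real.mul_rpow (Nat.cast_nonneg a) (Nat.cast_nonneg b)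

@[simp] lemma golombRpowHom_apply (s : ℝ) (m : ℕ) :
    golombRpowHom s m = (m : ℝ) ^ (-s) := rfl

lemma golomb_primesBelow_nth (n : ℕ) :
    (Nat.nth Nat.Prime n).primesBelow = (Finset.range n).image (Nat.nth Nat.Prime) := by
  ext p
  simp only [Nat.mem_primesBelow, Finset.mem_image, Finset.mem_range]
  constructor
  · rintro ⟨hlt, hp⟩
    refine ⟨Nat.count Nat.Prime p, ?_, Nat.nth_count hp⟩
    rw [← Nat.nth_lt_nth Nat.infinite_setOf_prime, Nat.nth_count hp]
    exact hlt
  · rintro ⟨k, hk, rfl⟩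
    exact ⟨(Nat.nth_lt_nth Nat.infinite_setOf_prime).2 hk, Nat.prime_nth_prime k⟩

lemma golomb_tendsto_const_rpow_div (c a : ℝ) (hc : c ≠ 0) :
    Tendsto (fun s : ℝ => c ^ (a / s)) atTop (nhds 1) := by
  have h1 : Tendsto (fun s : ℝ => a / s) atTop (nhds 0) := by
    simpa [div_eq_mul_inv] using tendsto_inv_atTop_zero.const_mul a
  have h2 := Filter.Tendsto.rpow (tendsto_const_nhds (x := c)) h1 (Or.inl hc)
  simpa using h2

/-- Golomb's recurrence for primes: with `p k = Nat.nth Nat.Prime k` the `(k+1)`-st prime,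
`Q n s = ∏_{k < n} (1 - p k ^ (-s))⁻¹` the partial Euler product, and
`ζ(s) = ∑' n, (n+1) ^ (-s)` for real `s`, we have
`p (n+1) = lim_{s → ∞} (1 - Q n s / ζ s) ^ (-1/s)` (here `Nat.nth Nat.Prime n` is the
`(n+1)`-st prime). -/
theorem golomb_prime_recurrence (n : ℕ) :
    Tendsto
      (fun s : ℝ =>
        (1 - (∏ k ∈ Finset.range n, (1 - ((Nat.nth Nat.Prime k : ℝ)) ^ (-s))⁻¹) /
              (∑' j : ℕ, ((j : ℝ) + 1) ^ (-s))) ^ (-1 / s))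
      atTop (nhds (Nat.nth Nat.Prime n : ℝ)) := by
  set P : ℕ := Nat.nth Nat.Prime n with hPdef
  have hPp : P.Prime := Nat.prime_nth_prime n
  have hP0 : (0 : ℝ) < (P : ℝ) := by exact_mod_cast hPp.pos
  have hP2 : (2 : ℝ) ≤ (P : ℝ) := by exact_mod_cast hPp.two_le
  have hsum2 : Summable (fun m : ℕ => (m : ℝ) ^ (-2 : ℝ)) :=
    Real.summable_nat_rpow.mpr (by norm_num)
  set C : ℝ := ∑' m : ℕ, (m : ℝ) ^ (-2 : ℝ) with hCdef
  have hC1 : (1 : ℝ) ≤ C := by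
    have := Summable.le_tsum hsum2 1 (fun j _ => Real.rpow_nonneg (Nat.cast_nonneg j) _)
    simpa only [Nat.cast_one, Real.one_rpow] using this
  have hC0 : (0 : ℝ) < C := lt_of_lt_of_le one_pos hC1
  set K : ℝ := C * (P : ℝ) ^ (2 : ℝ) with hKdef
  have hK0 : 0 < K := by
    have : (0:ℝ) < (P : ℝ) ^ (2 : ℝ) := Real.rpow_pos_of_pos hP0 _
    positivity
  have key : ∀ s : ℝ, 2 ≤ s →
      K ^ (-1 / s) * (P : ℝ) ≤
        (1 - (∏ k ∈ Finset.range n, (1 - ((Nat.nth Nat.Prime k : ℝ)) ^ (-s))⁻¹) /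
              (∑' j : ℕ, ((j : ℝ) + 1) ^ (-s))) ^ (-1 / s) ∧
      (1 - (∏ k ∈ Finset.range n, (1 - ((Nat.nth Nat.Prime k : ℝ)) ^ (-s))⁻¹) /
              (∑' j : ℕ, ((j : ℝ) + 1) ^ (-s))) ^ (-1 / s) ≤ C⁻¹ ^ (-1 / s) * (P : ℝ) := by
    intro s hs
    have hs0 : (0 : ℝ) < s := by linarith
    have hsne : s ≠ 0 := hs0.ne'
    have hsum : Summable (fun m : ℕ => (m : ℝ) ^ (-s)) :=
      Real.summable_nat_rpow.mpr (by linarith)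
    set Z : ℝ := ∑' m : ℕ, (m : ℝ) ^ (-s) with hZdef
    set S : Set ℕ := P.smoothNumbers with hSdef
    set D : ℝ := ∑' m : ↑Sᶜ, ((m : ℕ) : ℝ) ^ (-s) with hDdef
    -- the zeta sum in the statement equals Z
    have hζ : (∑' j : ℕ, ((j : ℝ) + 1) ^ (-s)) = Z := by
      rw [hZdef, Summable.tsum_eq_zero_add hsum]
      have h0 : ((0 : ℕ) : ℝ) ^ (-s) = 0 := by
        rw [Nat.cast_zero, Real.zero_rpow (by intro h; apply hsne; linarith [neg_eq_zero.mp h])]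
      rw [h0, zero_add]
      exact tsum_congr fun j => by push_cast; ring_nf
    -- the partial Euler product equals the sum over smooth numbers
    have hQ : (∏ k ∈ Finset.range n, (1 - ((Nat.nth Nat.Prime k : ℝ)) ^ (-s))⁻¹)
        = ∑' m : ↑S, ((m : ℕ) : ℝ) ^ (-s) := by
      have hsum' : Summable ⇑(golombRpowHom s) := hsum
      have h := EulerProduct.prod_primesBelow_geometric_eq_tsum_smoothNumbers
        (f := golombRpowHom s) hsum' P
      rw [hPdef, golomb_primesBelow_nth,
        Finset.prod_image (fun a _ b _ hab => Nat.nth_injective Nat.infinite_setOf_prime hab)]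
        at h
      simpa [hSdef, hPdef] using h
    have hsumS : Summable ((fun m : ℕ => (m : ℝ) ^ (-s)) ∘ (Subtype.val : ↑S → ℕ)) :=
      hsum.subtype _
    have hsumSc : Summable ((fun m : ℕ => (m : ℝ) ^ (-s)) ∘ (Subtype.val : ↑Sᶜ → ℕ)) :=
      hsum.subtype _
    have hsplit : (∑' m : ↑S, ((m : ℕ) : ℝ) ^ (-s)) + D = Z :=
      Summable.tsum_add_tsum_compl hsumS hsumSc
    have hPS : P ∈ Sᶜ := by
      intro h
      exact lt_irrefl P ((Nat.mem_smoothNumbers'.mp h) P hPp dvd_rfl)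
    have hD_lb : (P : ℝ) ^ (-s) ≤ D :=
      Summable.le_tsum hsumSc (⟨P, hPS⟩ : ↑Sᶜ)
        (fun j _ => Real.rpow_nonneg (Nat.cast_nonneg _) _)
    have hD0 : 0 < D := lt_of_lt_of_le (Real.rpow_pos_of_pos hP0 _) hD_lb
    -- upper bound on D
    have hterm : ∀ m : ↑Sᶜ, ((m : ℕ) : ℝ) ^ (-s) ≤
        ((m : ℕ) : ℝ) ^ (-2 : ℝ) * ((P : ℝ) ^ (2 : ℝ) * (P : ℝ) ^ (-s)) := by
      rintro ⟨m, hm⟩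
      rcases Nat.eq_zero_or_pos m with rfl | hm0
      · simp [Real.zero_rpow (show -s ≠ 0 by simpa using hsne)]
      · have hm' : ¬ ∀ p, p.Prime → p ∣ m → p < P := fun h =>
          hm (Nat.mem_smoothNumbers'.mpr h)
        push_neg at hm'
        obtain ⟨q, hq, hqd, hqP⟩ := hm'
        have hPm : P ≤ m := le_trans hqP (Nat.le_of_dvd hm0 hqd)
        have hmR : (P : ℝ) ≤ (m : ℝ) := by exact_mod_cast hPm
        have hm0R : (0 : ℝ) < (m : ℝ) := lt_of_lt_of_le hP0 hmR
        have e1 : ((m : ℕ) : ℝ) ^ (-s) = (m : ℝ) ^ (-2 : ℝ) * (m : ℝ) ^ ((2 : ℝ) - s) := by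
          rw [← Real.rpow_add hm0R]; ring_nf
        have e2 : (P : ℝ) ^ (2 : ℝ) * (P : ℝ) ^ (-s) = (P : ℝ) ^ ((2 : ℝ) - s) := by
          rw [← Real.rpow_add hP0]; ring_nf
        rw [e1, e2]
        have h3 : (m : ℝ) ^ ((2 : ℝ) - s) ≤ (P : ℝ) ^ ((2 : ℝ) - s) :=
          Real.rpow_le_rpow_of_nonpos hP0 hmR (by linarith)
        exact mul_le_mul_of_nonneg_left h3 (Real.rpow_nonneg (Nat.cast_nonneg m) _)
    have hD_ub : D ≤ K * (P : ℝ) ^ (-s) := by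
      have h1 : D ≤ ∑' m : ↑Sᶜ, ((m : ℕ) : ℝ) ^ (-2 : ℝ) * ((P : ℝ) ^ (2 : ℝ) * (P : ℝ) ^ (-s)) :=
        Summable.tsum_le_tsum hterm hsumSc ((hsum2.subtype _).mul_right _)
      have h2 : (∑' m : ↑Sᶜ, ((m : ℕ) : ℝ) ^ (-2 : ℝ) * ((P : ℝ) ^ (2 : ℝ) * (P : ℝ) ^ (-s)))
          = (∑' m : ↑Sᶜ, ((m : ℕ) : ℝ) ^ (-2 : ℝ)) * ((P : ℝ) ^ (2 : ℝ) * (P : ℝ) ^ (-s)) :=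
        tsum_mul_right
      have h3 : (∑' m : ↑Sᶜ, ((m : ℕ) : ℝ) ^ (-2 : ℝ)) ≤ C :=
        Summable.tsum_subtype_le _ _ (fun a => Real.rpow_nonneg (Nat.cast_nonneg a) _) hsum2
      calc D ≤ (∑' m : ↑Sᶜ, ((m : ℕ) : ℝ) ^ (-2 : ℝ)) * ((P : ℝ) ^ (2 : ℝ) * (P : ℝ) ^ (-s)) := by
              rw [← h2]; exact h1
        _ ≤ C * ((P : ℝ) ^ (2 : ℝ) * (P : ℝ) ^ (-s)) := by
              apply mul_le_mul_of_nonneg_right h3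
              positivity
        _ = K * (P : ℝ) ^ (-s) := by rw [hKdef]; ring
    -- bounds on Z
    have hZ_lb : (1 : ℝ) ≤ Z := by
      have := Summable.le_tsum hsum 1 (fun j _ => Real.rpow_nonneg (Nat.cast_nonneg j) _)
      simpa using this
    have hZ0 : (0 : ℝ) < Z := lt_of_lt_of_le one_pos hZ_lb
    have hZ_ub : Z ≤ C := by
      refine Summable.tsum_le_tsum (fun m => ?_) hsum hsum2
      rcases Nat.eq_zero_or_pos m with rfl | hm0
      · simp [Real.zero_rpow (show -s ≠ 0 by simpa using hsne),
          Real.zero_rpow (show (-2 : ℝ) ≠ 0 by norm_num)]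
      · exact Real.rpow_le_rpow_of_exponent_le (by exact_mod_cast hm0) (by linarith)
    -- the expression equals (D / Z) ^ (-1/s)
    have hQZ : (∑' m : ↑S, ((m : ℕ) : ℝ) ^ (-s)) = Z - D := by linarith
    have hEq : (1 - (∏ k ∈ Finset.range n, (1 - ((Nat.nth Nat.Prime k : ℝ)) ^ (-s))⁻¹) /
          (∑' j : ℕ, ((j : ℝ) + 1) ^ (-s))) = D / Z := by
      rw [hζ, hQ, hQZ]
      field_simp
      ring
    have hx0 : (0 : ℝ) < D / Z := div_pos hD0 hZ0
    have hx_lb : C⁻¹ * (P : ℝ) ^ (-s) ≤ D / Z := by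
      have h := div_le_div₀ hD0.le hD_lb hZ0 hZ_ub
      rwa [div_eq_inv_mul] at h
    have hx_ub : D / Z ≤ K * (P : ℝ) ^ (-s) := by
      have h1 : D / Z ≤ D := by
        rw [div_le_iff₀ hZ0]
        nlinarith
      exact le_trans h1 hD_ub
    have hcomp : ∀ a : ℝ, 0 < a → (a * (P : ℝ) ^ (-s)) ^ (-1 / s) = a ^ (-1 / s) * (P : ℝ) := by
      intro a ha
      rw [Real.mul_rpow ha.le (Real.rpow_nonneg hP0.le _), ← Real.rpow_mul hP0.le]
      have : -s * (-1 / s) = 1 := by field_simp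
      rw [this, Real.rpow_one]
    have he : -1 / s ≤ 0 := by
      apply div_nonpos_of_nonpos_of_nonneg <;> linarith
    rw [hEq]
    constructor
    · have h := Real.rpow_le_rpow_of_nonpos hx0 hx_ub he
      rwa [hcomp K hK0] at h
    · have h := Real.rpow_le_rpow_of_nonpos (by positivity) hx_lb he
      rwa [hcomp C⁻¹ (inv_pos.mpr hC0)] at h
  refine tendsto_of_tendsto_of_tendsto_of_le_of_le'
    (g := fun s : ℝ => K ^ (-1 / s) * (P : ℝ))
    (h := fun s : ℝ => C⁻¹ ^ (-1 / s) * (P : ℝ)) ?_ ?_ ?_ ?_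
  · have := (golomb_tendsto_const_rpow_div K (-1) hK0.ne').mul_const (P : ℝ)
    simpa using this
  · have := (golomb_tendsto_const_rpow_div C⁻¹ (-1) (inv_pos.mpr hC0).ne').mul_const (P : ℝ)
    simpa using this
  · filter_upwards [eventually_ge_atTop 2] with s hs
    exact (key s hs).1
  · filter_upwards [eventually_ge_atTop 2] with s hs
    exact (key s hs).2
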